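/- Let P be a parametric Markov chain over states S, r a region (with bounds a, b) that is well-defined for P, T ⊆ S a target set and s₀ ∈ S. For every relaxed valuation w ∈ rel(r) let q_w be the reachability-probability vector of (M w, T), and assume these least elements exist. Then there exists a relaxed valuation w* ∈ rel(r) such that w* s is a vertex of r for every s ∈ S and q_w s₀ ≤ q_{w*} s₀ for every w ∈ rel(r); i.e. the maximal reachability probability over the relaxed region is attained at a valuation assigning to every state a vertex of r. -/

import Mathlib

open Finset

/-- A stochastic matrix over a finite state space. -/
def IsStochastic {S : Type*} [Fintype S] (P : S → S → ℝ) : Prop :=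
  (∀ s s', 0 ≤ P s s') ∧ ∀ s, ∑ s', P s s' = 1

/-- A solution of the reachability equation system for target set `T`. -/
def ReachSol {S : Type*} [Fintype S] (P : S → S → ℝ) (T : Set S) (q : S → ℝ) : Prop :=
  (∀ s, 0 ≤ q s) ∧ (∀ s ∈ T, q s = 1) ∧ ∀ s ∉ T, q s = ∑ s', P s s' * q s'

/-- `p` is the reachability-probability vector: the pointwise-least solution. -/
def IsReachVec {S : Type*} [Fintype S] (P : S → S → ℝ) (T : Set S) (p : S → ℝ) : Prop :=
  ReachSol P T p ∧ ∀ q, ReachSol P T q → ∀ s, p s ≤ q s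

/-- An affine real function. -/
def IsAffine (f : ℝ → ℝ) : Prop := ∃ c d : ℝ, ∀ x, f x = c * x + d

/-- A multi-affine function on valuations. -/
def MultiAffine {V : Type*} [DecidableEq V] (f : (V → ℝ) → ℝ) : Prop :=
  ∀ (x : V) (u : V → ℝ), ∃ c d : ℝ, ∀ t : ℝ, f (Function.update u x t) = c * t + d

/-- Membership of a valuation in the region with bounds `a`, `b`. -/
def InRegion {V : Type*} (a b u : V → ℝ) : Prop := ∀ x, a x ≤ u x ∧ u x ≤ b x

/-- A vertex of the region with bounds `a`, `b`. -/
def IsVertex {V : Type*} (a b v : V → ℝ) : Prop := ∀ x, v x = a x ∨ v x = b x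

/-- The region with bounds `a`, `b` is well-defined for the pMC `P`. -/
def PMCWellDef {V S : Type*} [Fintype S] (P : (V → ℝ) → S → S → ℝ) (a b : V → ℝ) : Prop :=
  (∀ u, InRegion a b u → IsStochastic (P u)) ∧
  ∀ s s', (∀ u, InRegion a b u → P u s s' = 0) ∨ ∀ u, InRegion a b u → 0 < P u s s'

section Aux

set_option linter.unusedSectionVars false
variable {V S : Type*} [Fintype V] [Nonempty V] [DecidableEq V] [Fintype S] [Nonempty S]

noncomputable def vert (a b : V → ℝ) (c : V → Bool) : V → ℝ := fun x => if c x then b x else a x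

lemma vert_isVertex (a b : V → ℝ) (c : V → Bool) : IsVertex a b (vert a b c) := by
  intro x; unfold vert; by_cases h : c x <;> simp [h]

lemma vert_inRegion {a b : V → ℝ} (hab : ∀ x, a x ≤ b x) (c : V → Bool) :
    InRegion a b (vert a b c) := by
  intro x; unfold vert; by_cases h : c x <;> simp [h, hab x]

lemma multiAffine_le_vert_aux {a b : V → ℝ} (hab : ∀ x, a x ≤ b x)
    {f : (V → ℝ) → ℝ} (hf : MultiAffine f) (F : Finset V) :
    ∀ u, InRegion a b u → (∀ x, x ∉ F → u x = a x ∨ u x = b x) →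
      ∃ c : V → Bool, f u ≤ f (vert a b c) := by
  classical
  induction F using Finset.induction_on with
  | empty =>
      intro u hu hend
      refine ⟨fun x => if u x = b x then true else false, ?_⟩
      have hv : vert a b (fun x => if u x = b x then true else false) = u := by
        funext x
        by_cases h : u x = b x
        · simp [vert, h]
        · rcases hend x (by simp) with h' | h'
          · have hb : (if u x = b x then true else false) = false := by simp [h]
            show (if (if u x = b x then true else false) = true then b x else a x) = u x
            rw [hb, if_neg (by simp), h']
          · exact absurd h' h
      rw [hv]
  | @insert y F' hy ih =>
      intro u hu hend
      obtain ⟨cc, d, hcd⟩ := hf y u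
      set t : ℝ := if 0 ≤ cc then b y else a y with ht
      have hfu : f u = cc * u y + d := by
        have : f (Function.update u y (u y)) = cc * u y + d := hcd (u y)
        rwa [Function.update_eq_self] at this
      have hle : f u ≤ f (Function.update u y t) := by
        rw [hfu, hcd t]
        by_cases h : 0 ≤ cc
        · simp only [ht, if_pos h]
          exact add_le_add (mul_le_mul_of_nonneg_left (hu y).2 h) le_rfl
        · simp only [ht, if_neg h]
          exact add_le_add (mul_le_mul_of_nonpos_left (hu y).1 (le_of_not_ge h)) le_rfl
      have hu' : InRegion a b (Function.update u y t) := by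
        intro x
        by_cases hx : x = y
        · subst hx
          simp only [Function.update_self, ht]
          by_cases h : 0 ≤ cc <;> simp [h, hab x]
        · simpa [Function.update_of_ne hx] using hu x
      have hend' : ∀ x, x ∉ F' → Function.update u y t x = a x ∨ Function.update u y t x = b x := by
        intro x hx
        by_cases hxy : x = y
        · subst hxy
          simp only [Function.update_self, ht]
          by_cases h : 0 ≤ cc <;> simp [h]
        · rw [Function.update_of_ne hxy]
          exact hend x (by simp [hxy, hx])
      obtain ⟨c, hc⟩ := ih (Function.update u y t) hu' hend'
      exact ⟨c, hle.trans hc⟩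

lemma multiAffine_le_vert {a b : V → ℝ} (hab : ∀ x, a x ≤ b x)
    {f : (V → ℝ) → ℝ} (hf : MultiAffine f) {u : V → ℝ} (hu : InRegion a b u) :
    ∃ c : V → Bool, f u ≤ f (vert a b c) :=
  multiAffine_le_vert_aux hab hf Finset.univ u hu (fun x hx => absurd (Finset.mem_univ x) hx)

lemma multiAffine_weighted_sum {P : (V → ℝ) → S → S → ℝ}
    (hma : ∀ s s', MultiAffine fun u => P u s s') (s : S) (k : S → ℝ) :
    MultiAffine (fun u => ∑ s', P u s s' * k s') := by
  intro x u
  choose c d hcd using fun s' => hma s s' x u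
  refine ⟨∑ s', c s' * k s', ∑ s', d s' * k s', fun t => ?_⟩
  calc ∑ s', P (Function.update u x t) s s' * k s'
      = ∑ s', (c s' * k s' * t + d s' * k s') := by
        refine Finset.sum_congr rfl fun s' _ => ?_
        have h : P (Function.update u x t) s s' = c s' * t + d s' := hcd s' t
        rw [h]; ring
    _ = (∑ s', c s' * k s') * t + ∑ s', d s' * k s' := by
        rw [Finset.sum_add_distrib, Finset.sum_mul]

end Aux

section Bellman

set_option linter.unusedSectionVars false
variable {V S : Type*} [Fintype V] [Nonempty V] [DecidableEq V] [Fintype S] [Nonempty S]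

/-- Super-solutions of the discounted Bellman optimality system. -/
def GdSet (R : (V → Bool) → S → S → ℝ) (T : Set S) (γ : ℝ) : Set (S → ℝ) :=
  {g | (∀ s, 0 ≤ g s ∧ g s ≤ 1) ∧ (∀ s ∈ T, 1 ≤ g s) ∧
    ∀ s, s ∉ T → ∀ c, γ * ∑ s', R c s s' * g s' ≤ g s}

/-- The least super-solution (pointwise infimum). -/
noncomputable def pGam (R : (V → Bool) → S → S → ℝ) (T : Set S) (γ : ℝ) : S → ℝ :=
  fun s => sInf ((fun g => g s) '' GdSet R T γ)

variable {R : (V → Bool) → S → S → ℝ} {T : Set S}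

lemma one_mem_GdSet (hR : ∀ c, IsStochastic (R c)) {γ : ℝ} (hγ0 : 0 ≤ γ) (hγ1 : γ ≤ 1) :
    (fun _ => (1:ℝ)) ∈ GdSet R T γ := by
  refine ⟨fun s => ⟨zero_le_one, le_rfl⟩, fun s _ => le_rfl, fun s _ c => ?_⟩
  have h1 : ∑ s', R c s s' * (1:ℝ) = 1 := by
    simpa using (hR c).2 s
  rw [h1, mul_one]
  exact hγ1

lemma GdSet_bddBelow (γ : ℝ) (s : S) : BddBelow ((fun g => g s) '' (GdSet R T γ)) := by
  refine ⟨0, ?_⟩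
  rintro t ⟨g, hg, rfl⟩
  exact (hg.1 s).1

lemma pGam_le {γ : ℝ} {g : S → ℝ} (hg : g ∈ GdSet R T γ) (s : S) : pGam R T γ s ≤ g s :=
  csInf_le (GdSet_bddBelow γ s) ⟨g, hg, rfl⟩

lemma pGam_nonneg (hR : ∀ c, IsStochastic (R c)) {γ : ℝ} (hγ0 : 0 ≤ γ) (hγ1 : γ ≤ 1) (s : S) :
    0 ≤ pGam R T γ s := by
  refine le_csInf ⟨1, ⟨_, one_mem_GdSet hR hγ0 hγ1, rfl⟩⟩ ?_
  rintro t ⟨g, hg, rfl⟩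
  exact (hg.1 s).1

lemma pGam_mem (hR : ∀ c, IsStochastic (R c)) {γ : ℝ} (hγ0 : 0 ≤ γ) (hγ1 : γ ≤ 1) :
    pGam R T γ ∈ GdSet R T γ := by
  refine ⟨fun s => ⟨pGam_nonneg hR hγ0 hγ1 s, pGam_le (one_mem_GdSet hR hγ0 hγ1) s⟩,
    fun s hs => ?_, fun s hs c => ?_⟩
  · refine le_csInf ⟨1, ⟨_, one_mem_GdSet hR hγ0 hγ1, rfl⟩⟩ ?_
    rintro t ⟨g, hg, rfl⟩
    exact hg.2.1 s hs
  · refine le_csInf ⟨1, ⟨_, one_mem_GdSet hR hγ0 hγ1, rfl⟩⟩ ?_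
    rintro t ⟨g, hg, rfl⟩
    refine le_trans ?_ (hg.2.2 s hs c)
    apply mul_le_mul_of_nonneg_left _ hγ0
    refine Finset.sum_le_sum fun s' _ => ?_
    exact mul_le_mul_of_nonneg_left (pGam_le hg s') ((hR c).1 s s')

lemma pGam_mono (hR : ∀ c, IsStochastic (R c)) {γ γ' : ℝ} (hγ0 : 0 ≤ γ) (hγ'1 : γ' ≤ 1)
    (hγγ' : γ ≤ γ') (s : S) : pGam R T γ s ≤ pGam R T γ' s := by
  have hsub : GdSet R T γ' ⊆ GdSet R T γ := by
    rintro g ⟨hb, hT, hS⟩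
    refine ⟨hb, hT, fun s hs c => ?_⟩
    refine le_trans (mul_le_mul_of_nonneg_right hγγ' ?_) (hS s hs c)
    exact Finset.sum_nonneg fun s' _ => mul_nonneg ((hR c).1 s s') (hb s').1
  refine le_csInf ⟨1, ⟨_, one_mem_GdSet hR (hγ0.trans hγγ') hγ'1, rfl⟩⟩ ?_
  rintro t ⟨g, hg, rfl⟩
  exact pGam_le (hsub hg) _

/-- The least super-solution satisfies the Bellman inequality downwards:
at each non-target state some action witnesses it. -/
lemma pGam_bellman (hR : ∀ c, IsStochastic (R c)) {γ : ℝ} (hγ0 : 0 ≤ γ) (hγ1 : γ ≤ 1)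
    {s : S} (hs : s ∉ T) :
    ∃ c, pGam R T γ s ≤ γ * ∑ s', R c s s' * pGam R T γ s' := by
  classical
  set p := pGam R T γ with hp
  have hpmem := pGam_mem (T := T) hR hγ0 hγ1
  have hBne : (Finset.univ : Finset (V → Bool)).Nonempty := Finset.univ_nonempty
  set F : (S → ℝ) := fun s => if s ∈ T then 1 else
    γ * Finset.univ.sup' hBne (fun c => ∑ s', R c s s' * p s') with hF
  have hFle : ∀ s, F s ≤ p s := by
    intro s
    by_cases hsT : s ∈ T
    · rw [hF]; simp only [if_pos hsT]
      exact hpmem.2.1 s hsT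
    · rw [hF]; simp only [if_neg hsT]
      obtain ⟨c₁, _, hc₁⟩ := Finset.exists_mem_eq_sup' hBne (fun c => ∑ s', R c s s' * p s')
      rw [hc₁]
      exact hpmem.2.2 s hsT c₁
  have hFmem : F ∈ GdSet R T γ := by
    refine ⟨fun s => ⟨?_, (hFle s).trans (hpmem.1 s).2⟩, ?_, ?_⟩
    case refine_2 => intro s hsT; rw [hF]; simp [hsT]
    case refine_3 =>
      intro s hsT c
      have h1 : ∑ s', R c s s' * F s' ≤ ∑ s', R c s s' * p s' :=
        Finset.sum_le_sum fun s' _ => mul_le_mul_of_nonneg_left (hFle s') ((hR c).1 s s')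
      have h2 : γ * ∑ s', R c s s' * p s' ≤ F s := by
        rw [hF]; simp only [if_neg hsT]
        exact mul_le_mul_of_nonneg_left
          (Finset.le_sup' (fun c => ∑ s', R c s s' * p s') (Finset.mem_univ c)) hγ0
      exact (mul_le_mul_of_nonneg_left h1 hγ0).trans h2
    · by_cases hsT : s ∈ T
      · rw [hF]; simp [hsT]
      · rw [hF]; simp only [if_neg hsT]
        refine mul_nonneg hγ0 ?_
        have c₂ : V → Bool := fun _ => true
        refine le_trans ?_ (Finset.le_sup' (fun c => ∑ s', R c s s' * p s') (Finset.mem_univ c₂))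
        exact Finset.sum_nonneg fun s' _ => mul_nonneg ((hR c₂).1 s s') (hpmem.1 s').1
  have hpF : p s ≤ F s := pGam_le hFmem s
  rw [hF] at hpF
  simp only [if_neg hs] at hpF
  obtain ⟨c₀, _, hc₀⟩ := Finset.exists_mem_eq_sup' hBne (fun c => ∑ s', R c s s' * p s')
  rw [hc₀] at hpF
  exact ⟨c₀, hpF⟩

end Bellman

section Tarski

set_option linter.unusedSectionVars false
variable {S : Type*} [Fintype S] [Nonempty S] {T : Set S}

/-- Below any nonnegative super-solution of the reachability system there is an exact solution. -/
lemma exists_reachSol_le {M : S → S → ℝ} (hM0 : ∀ s s', 0 ≤ M s s') {g : S → ℝ}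
    (hg0 : ∀ s, 0 ≤ g s) (hgT : ∀ s ∈ T, 1 ≤ g s)
    (hgS : ∀ s, s ∉ T → ∑ s', M s s' * g s' ≤ g s) :
    ∃ h, ReachSol M T h ∧ ∀ s, h s ≤ g s := by
  classical
  set G : Set (S → ℝ) := {g' | (∀ s, 0 ≤ g' s ∧ g' s ≤ g s) ∧ (∀ s ∈ T, 1 ≤ g' s) ∧
    ∀ s, s ∉ T → ∑ s', M s s' * g' s' ≤ g' s} with hG
  have hgG : g ∈ G := ⟨fun s => ⟨hg0 s, le_rfl⟩, hgT, hgS⟩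
  have hbdd : ∀ s, BddBelow ((fun g' => g' s) '' G) := by
    intro s
    exact ⟨0, by rintro t ⟨g', hg', rfl⟩; exact (hg'.1 s).1⟩
  have hne : ∀ s, ((fun g' => g' s) '' G).Nonempty := fun s => ⟨g s, g, hgG, rfl⟩
  set h : S → ℝ := fun s => sInf ((fun g' => g' s) '' G) with hh
  have hle : ∀ g' ∈ G, ∀ s, h s ≤ g' s := fun g' hg' s => csInf_le (hbdd s) ⟨g', hg', rfl⟩
  have hhG : h ∈ G := by
    refine ⟨fun s => ⟨?_, hle g hgG s⟩, fun s hs => ?_, fun s hs => ?_⟩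
    · exact le_csInf (hne s) (by rintro t ⟨g', hg', rfl⟩; exact (hg'.1 s).1)
    · exact le_csInf (hne s) (by rintro t ⟨g', hg', rfl⟩; exact hg'.2.1 s hs)
    · refine le_csInf (hne s) ?_
      rintro t ⟨g', hg', rfl⟩
      refine le_trans ?_ (hg'.2.2 s hs)
      exact Finset.sum_le_sum fun s' _ => mul_le_mul_of_nonneg_left (hle g' hg' s') (hM0 s s')
  set h' : S → ℝ := fun s => if s ∈ T then 1 else ∑ s', M s s' * h s' with hh'
  have hh'le : ∀ s, h' s ≤ h s := by
    intro s
    by_cases hs : s ∈ T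
    · rw [hh']; simp only [if_pos hs]; exact hhG.2.1 s hs
    · rw [hh']; simp only [if_neg hs]; exact hhG.2.2 s hs
  have hh'G : h' ∈ G := by
    refine ⟨fun s => ⟨?_, (hh'le s).trans (hhG.1 s).2⟩, fun s hs => by rw [hh']; simp [hs],
      fun s hs => ?_⟩
    · by_cases hs : s ∈ T
      · rw [hh']; simp [hs]
      · rw [hh']; simp only [if_neg hs]
        exact Finset.sum_nonneg fun s' _ => mul_nonneg (hM0 s s') (hhG.1 s').1
    · have h1 : ∑ s', M s s' * h' s' ≤ ∑ s', M s s' * h s' :=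
        Finset.sum_le_sum fun s' _ => mul_le_mul_of_nonneg_left (hh'le s') (hM0 s s')
      rw [hh']; simp only [if_neg hs]
      exact h1
  have heq : h = h' := le_antisymm (fun s => hle h' hh'G s) hh'le
  refine ⟨h, ⟨fun s => (hhG.1 s).1, fun s hs => ?_, fun s hs => ?_⟩, fun s => (hhG.1 s).2⟩
  · rw [heq, hh']; simp [hs]
  · conv_lhs => rw [heq, hh']
    simp only [if_neg hs]

/-- A fixed point of a strictly discounted system lies below any super-solution. -/
lemma disc_le {M : S → S → ℝ} (hM : IsStochastic M) {γ : ℝ} (hγ0 : 0 ≤ γ) (hγ1 : γ < 1)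
    {p g : S → ℝ} (hpT : ∀ s, p s ≤ 1)
    (hp : ∀ s, s ∉ T → p s ≤ γ * ∑ s', M s s' * p s')
    (hg : ReachSol M T g) : ∀ s, p s ≤ g s := by
  by_contra hcon
  push_neg at hcon
  obtain ⟨s₁, hs₁⟩ := hcon
  obtain ⟨sm, hsm⟩ := Finite.exists_max (fun s => p s - g s)
  set m := p sm - g sm with hm
  have hmpos : 0 < m := lt_of_lt_of_le (by linarith) (hsm s₁)
  have hsmT : sm ∉ T := by
    intro hsT
    have := hg.2.1 sm hsT
    have := hpT sm
    simp only [hm] at hmpos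
    linarith
  have h1 : p sm ≤ γ * ∑ s', M sm s' * p s' := hp sm hsmT
  have h2 : g sm = ∑ s', M sm s' * g s' := hg.2.2 sm hsmT
  have h3 : ∑ s', M sm s' * g s' ≥ γ * ∑ s', M sm s' * g s' := by
    have : 0 ≤ ∑ s', M sm s' * g s' :=
      Finset.sum_nonneg fun s' _ => mul_nonneg (hM.1 sm s') (hg.1 s')
    nlinarith
  have h4 : m ≤ γ * ∑ s', M sm s' * (p s' - g s') := by
    have : γ * ∑ s', M sm s' * p s' - γ * ∑ s', M sm s' * g s'
        = γ * ∑ s', M sm s' * (p s' - g s') := by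
      rw [← mul_sub, ← Finset.sum_sub_distrib]
      congr 1
      exact Finset.sum_congr rfl fun s' _ => by ring
    calc m = p sm - g sm := hm
      _ ≤ γ * ∑ s', M sm s' * p s' - ∑ s', M sm s' * g s' := by rw [← h2]; linarith
      _ ≤ γ * ∑ s', M sm s' * p s' - γ * ∑ s', M sm s' * g s' := by linarith
      _ = γ * ∑ s', M sm s' * (p s' - g s') := this
  have h5 : ∑ s', M sm s' * (p s' - g s') ≤ ∑ s', M sm s' * m := by
    refine Finset.sum_le_sum fun s' _ => mul_le_mul_of_nonneg_left (hsm s') (hM.1 sm s')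
  have h6 : ∑ s', M sm s' * m = m := by
    rw [← Finset.sum_mul]
    rw [hM.2 sm, one_mul]
  have : m ≤ γ * m := by
    calc m ≤ γ * ∑ s', M sm s' * (p s' - g s') := h4
      _ ≤ γ * (∑ s', M sm s' * m) := mul_le_mul_of_nonneg_left h5 hγ0
      _ = γ * m := by rw [h6]
  nlinarith

end Tarski

/-- The maximal reachability probability over the relaxed region is attained
at a relaxed valuation assigning to every state a vertex of the region. -/
theorem pMC_relaxation_vertex_optimal
    {V S : Type*} [Fintype V] [Nonempty V] [DecidableEq V] [Fintype S] [Nonempty S]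
    (P : (V → ℝ) → S → S → ℝ)
    (hma : ∀ s s', MultiAffine fun u => P u s s')
    (a b : V → ℝ) (hab : ∀ x, a x ≤ b x)
    (hwd : PMCWellDef P a b)
    (T : Set S) (s₀ : S)
    (q : (S → V → ℝ) → S → ℝ)
    (hq : ∀ w : S → V → ℝ, (∀ s, InRegion a b (w s)) →
      IsReachVec (fun s s' => P (w s) s s') T (q w)) :
    ∃ wstar : S → V → ℝ, (∀ s, IsVertex a b (wstar s)) ∧ (∀ s, InRegion a b (wstar s)) ∧
      ∀ w : S → V → ℝ, (∀ s, InRegion a b (w s)) → q w s₀ ≤ q wstar s₀ := by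
  classical
  set R : (V → Bool) → S → S → ℝ := fun c s s' => P (vert a b c) s s' with hRdef
  have hR : ∀ c, IsStochastic (R c) := fun c => hwd.1 _ (vert_inRegion hab c)
  set γ : ℕ → ℝ := fun n => 1 - 1/(n+1) with hγdef
  have hpos : ∀ n : ℕ, (0:ℝ) < (n:ℝ) + 1 := by
    intro n; have : (0:ℝ) ≤ (n:ℝ) := Nat.cast_nonneg n; linarith
  have hγ0 : ∀ n, 0 ≤ γ n := by
    intro n
    have h1 : 1/((n:ℝ)+1) ≤ 1 := by
      rw [div_le_one (hpos n)]
      have : (0:ℝ) ≤ (n:ℝ) := Nat.cast_nonneg n; linarith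
    simp only [hγdef]; linarith
  have hγlt : ∀ n, γ n < 1 := by
    intro n
    have h1 : 0 < 1/((n:ℝ)+1) := one_div_pos.mpr (hpos n)
    simp only [hγdef]; linarith
  have hγ1 : ∀ n, γ n ≤ 1 := fun n => (hγlt n).le
  have hγmono : Monotone γ := by
    intro n m hnm
    have h1 : 1/((m:ℝ)+1) ≤ 1/((n:ℝ)+1) := by
      apply one_div_le_one_div_of_le (hpos n)
      have : (n:ℝ) ≤ (m:ℝ) := Nat.cast_le.mpr hnm
      linarith
    simp only [hγdef]; linarith
  have hγtend : Filter.Tendsto γ Filter.atTop (nhds 1) := by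
    rw [hγdef]
    have := Filter.Tendsto.sub (tendsto_const_nhds (x := (1:ℝ)) (f := Filter.atTop))
      tendsto_one_div_add_atTop_nhds_zero_nat
    simpa [one_div] using this
  set pn : ℕ → S → ℝ := fun n => pGam R T (γ n) with hpndef
  obtain ⟨cstar, hcstar⟩ :=
    Finite.exists_max (fun c : S → (V → Bool) => q (fun s => vert a b (c s)) s₀)
  refine ⟨fun s => vert a b (cstar s), fun s => vert_isVertex a b _,
    fun s => vert_inRegion hab _, ?_⟩
  intro w hw
  -- Step 1: each discounted optimal value is dominated by the best pure vertex strategy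
  have step1 : ∀ n, pn n s₀ ≤ q (fun s => vert a b (cstar s)) s₀ := by
    intro n
    have hex : ∀ s, ∃ c : V → Bool, s ∉ T → pn n s ≤ γ n * ∑ s', R c s s' * pn n s' := by
      intro s
      by_cases hs : s ∈ T
      · exact ⟨fun _ => true, fun h => absurd hs h⟩
      · obtain ⟨c, hc⟩ := pGam_bellman hR (hγ0 n) (hγ1 n) hs
        exact ⟨c, fun _ => hc⟩
    choose σ hσ using hex
    have hwσ : ∀ s, InRegion a b (vert a b (σ s)) := fun s => vert_inRegion hab _
    have hqσ := hq (fun s => vert a b (σ s)) hwσ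
    have hMσ : IsStochastic (fun s s' => P (vert a b (σ s)) s s') :=
      ⟨fun s s' => (hwd.1 _ (hwσ s)).1 s s', fun s => (hwd.1 _ (hwσ s)).2 s⟩
    have hd : ∀ s, pn n s ≤ q (fun s => vert a b (σ s)) s :=
      disc_le hMσ (hγ0 n) (hγlt n)
        (fun s => ((pGam_mem hR (hγ0 n) (hγ1 n)).1 s).2)
        (fun s hs => hσ s hs) hqσ.1
    exact (hd s₀).trans (hcstar σ)
  set L : S → ℝ := fun s => ⨆ n, pn n s with hLdef
  have hbddL : ∀ s, BddAbove (Set.range fun n => pn n s) := by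
    intro s
    refine ⟨1, ?_⟩
    rintro t ⟨n, rfl⟩
    exact ((pGam_mem hR (hγ0 n) (hγ1 n)).1 s).2
  have hmonoL : ∀ s, Monotone fun n => pn n s := by
    intro s n m hnm
    exact pGam_mono hR (hγ0 n) (hγ1 m) (hγmono hnm) s
  have htendL : ∀ s, Filter.Tendsto (fun n => pn n s) Filter.atTop (nhds (L s)) :=
    fun s => tendsto_atTop_ciSup (hmonoL s) (hbddL s)
  have hLmem : L ∈ GdSet R T 1 := by
    refine ⟨fun s => ⟨?_, ?_⟩, fun s hs => ?_, fun s hs c => ?_⟩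
    · exact (pGam_nonneg hR (hγ0 0) (hγ1 0) s).trans (le_ciSup (hbddL s) 0)
    · exact ciSup_le fun n => ((pGam_mem hR (hγ0 n) (hγ1 n)).1 s).2
    · exact ((pGam_mem hR (hγ0 0) (hγ1 0)).2.1 s hs).trans (le_ciSup (hbddL s) 0)
    · have hub : ∀ n, γ n * ∑ s', R c s s' * pn n s' ≤ L s := fun n =>
        ((pGam_mem hR (hγ0 n) (hγ1 n)).2.2 s hs c).trans (le_ciSup (hbddL s) n)
      have htt : Filter.Tendsto (fun n => γ n * ∑ s', R c s s' * pn n s')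
          Filter.atTop (nhds (1 * ∑ s', R c s s' * L s')) := by
        refine Filter.Tendsto.mul hγtend ?_
        exact tendsto_finset_sum _ fun s' _ => (htendL s').const_mul (R c s s')
      exact le_of_tendsto htt (Filter.Eventually.of_forall hub)
  have hstar_le_L : pGam R T 1 s₀ ≤ L s₀ := pGam_le hLmem s₀
  have hL_le : L s₀ ≤ q (fun s => vert a b (cstar s)) s₀ := ciSup_le step1
  -- Step 2: q w is dominated by the undiscounted optimal value pGam R T 1
  have hp1mem := pGam_mem (T := T) hR zero_le_one le_rfl
  have hsup : ∀ s, s ∉ T → ∑ s', P (w s) s s' * pGam R T 1 s' ≤ pGam R T 1 s := by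
    intro s hs
    obtain ⟨c, hc⟩ := multiAffine_le_vert hab (multiAffine_weighted_sum hma s (pGam R T 1)) (hw s)
    refine hc.trans ?_
    have := hp1mem.2.2 s hs c
    rw [one_mul] at this
    exact this
  obtain ⟨h, hhsol, hhle⟩ := exists_reachSol_le (T := T)
    (M := fun s s' => P (w s) s s')
    (fun s s' => (hwd.1 _ (hw s)).1 s s')
    (fun s => (hp1mem.1 s).1)
    (fun s hs => hp1mem.2.1 s hs) hsup
  have hqwh : q w s₀ ≤ h s₀ := (hq w hw).2 h hhsol s₀
  have : h s₀ ≤ pGam R T 1 s₀ := hhle s₀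
  linarith
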